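/- Let d be a standard n-distance on X that is repetition invariant, and let k ∈ {2,…,n-1}. For any n₁,…,n_k ≥ 1 with n₁+⋯+n_k = n, define d'(x₁,…,x_k) = d(n₁·x₁,…,n_k·x_k) (each xᵢ repeated nᵢ times). Then d'(x₁,…,x_k) ≤ (1/(k-1) + 1/(k(k-1)(n-1)))·∑_{i=1}^k d'(x₁,…,x_k)ᵢᶻ for all x₁,…,x_k,z ∈ X. -/

import Mathlib

open Finset Function

/-- `d` is an `n`-distance: nonnegative, vanishing exactly on constant tuples,
symmetric, and satisfying the simplex inequality. -/
structure IsNDistance {X : Type*} {n : ℕ} (d : (Fin n → X) → ℝ) : Prop where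
  nonneg : ∀ x, 0 ≤ d x
  eq_zero_iff : ∀ x, d x = 0 ↔ ∀ i j : Fin n, x i = x j
  symm : ∀ (x : Fin n → X) (σ : Equiv.Perm (Fin n)), d (x ∘ σ) = d x
  simplex : ∀ (x : Fin n → X) (z : X), d x ≤ ∑ i, d (Function.update x i z)

/-- The \$n\$-tuple obtained by repeating each \$x_j\$ exactly \$m_j\$ times. -/
def blowup {X : Type*} {k n : ℕ} (m : Fin k → ℕ) (h : ∑ j, m j = n) (x : Fin k → X) :
    Fin n → X :=
  fun i => ((List.finRange k).flatMap fun j => List.replicate (m j) (x j)).get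
    (Fin.cast (by rw [List.length_flatMap, ← h, Fin.sum_univ_def]; congr 1;
                  simp [Function.comp_def]) i)

section Aux

variable {X : Type*}

lemma mem_range_blowup {k n : ℕ} (m : Fin k → ℕ) (h : ∑ j, m j = n)
    (hm : ∀ j, 1 ≤ m j) (x : Fin k → X) :
    Set.range (blowup m h x) = Set.range x := by
  set l := (List.finRange k).flatMap fun j => List.replicate (m j) (x j) with hl
  have e : l.length = n := by
    rw [hl, List.length_flatMap, ← h, Fin.sum_univ_def]; congr 1; simp [Function.comp_def]
  have key : ∀ q : Fin l.length, ∃ j, l.get q = x j := by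
    intro q
    have hmem : l.get q ∈ l := by
      have := List.get_mem l ⟨q.val, q.isLt⟩
      rwa [Fin.eta] at this
    obtain ⟨a, ha⟩ : ∃ a, l.get q = a := ⟨_, rfl⟩
    rw [ha] at hmem ⊢
    rw [hl, List.mem_flatMap] at hmem
    obtain ⟨j, -, hj⟩ := hmem
    exact ⟨j, List.eq_of_mem_replicate hj⟩
  ext a
  simp only [Set.mem_range, blowup]
  constructor
  · rintro ⟨i, rfl⟩
    obtain ⟨j, hj⟩ := key _
    exact ⟨j, hj.symm⟩
  · rintro ⟨j, rfl⟩
    have hmem : x j ∈ l :=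
      List.mem_flatMap.mpr ⟨j, List.mem_finRange j,
        List.mem_replicate.mpr ⟨Nat.one_le_iff_ne_zero.mp (hm j), rfl⟩⟩
    obtain ⟨p, hp⟩ := List.mem_iff_get.mp hmem
    refine ⟨⟨p.val, lt_of_lt_of_eq p.isLt e⟩, ?_⟩
    have hq : ∀ (q : Fin l.length), q = p → l.get q = x j := fun q hq => hq ▸ hp
    exact hq _ (Fin.ext rfl)

lemma range_update_eq' {α : Type*} [DecidableEq α] (g : α → X) (a : α) (z : X) :
    Set.range (Function.update g a z) = insert z (g '' {a}ᶜ) := by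
  ext b
  simp only [Set.mem_range, Set.mem_insert_iff, Set.mem_image, Set.mem_compl_iff,
    Set.mem_singleton_iff]
  constructor
  · rintro ⟨i, rfl⟩
    by_cases h : i = a
    · subst h; left; simp
    · right; exact ⟨i, h, by simp [Function.update_of_ne h]⟩
  · rintro (rfl | ⟨i, hi, rfl⟩)
    · exact ⟨a, by simp⟩
    · exact ⟨i, by simp [Function.update_of_ne hi]⟩

/-- `x₀, x₁, …, x_{k-1}, c, c, …, c`. -/
def padded {k n : ℕ} (x : Fin k → X) (c : X) : Fin n → X :=
  fun p => if h : (p : ℕ) < k then x ⟨p, h⟩ else c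

lemma range_padded {k n : ℕ} (hkn : k < n) (x : Fin k → X) (c : X) :
    Set.range (padded x c : Fin n → X) = insert c (Set.range x) := by
  ext a
  simp only [Set.mem_range, Set.mem_insert_iff, padded]
  constructor
  · rintro ⟨p, rfl⟩
    by_cases h : (p : ℕ) < k
    · right; exact ⟨⟨p, h⟩, by rw [dif_pos h]⟩
    · left; rw [dif_neg h]
  · rintro (rfl | ⟨l, rfl⟩)
    · exact ⟨⟨k, hkn⟩, by simp⟩
    · exact ⟨⟨l, l.isLt.trans hkn⟩, by simp [l.isLt]⟩

lemma range_update_padded_tail {k n : ℕ} (hkn : k < n) (x : Fin k → X) (c z : X)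
    (hc : c ∈ Set.range x) (p : Fin n) (hp : ¬ (p : ℕ) < k) :
    Set.range (Function.update (padded x c : Fin n → X) p z) = insert z (Set.range x) := by
  rw [range_update_eq']
  have himg : (padded x c : Fin n → X) '' {p}ᶜ = Set.range x := by
    ext a
    simp only [Set.mem_image, Set.mem_compl_iff, Set.mem_singleton_iff, Set.mem_range, padded]
    constructor
    · rintro ⟨q, -, rfl⟩
      by_cases h : (q : ℕ) < k
      · exact ⟨⟨q, h⟩, by rw [dif_pos h]⟩
      · rw [dif_neg h]; exact hc
    · rintro ⟨l, rfl⟩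
      refine ⟨⟨l, l.isLt.trans hkn⟩, fun hq => hp ?_, by simp [l.isLt]⟩
      have : (p : ℕ) = l := by rw [← hq]
      omega
  rw [himg]

lemma range_update_padded_head' {k n : ℕ} (hkn : k < n) (x : Fin k → X) (z : X)
    (p : Fin n) (hp : (p : ℕ) < k) :
    Set.range (Function.update (padded x (x ⟨p, hp⟩) : Fin n → X) p z)
      = insert z (Set.range x) := by
  rw [range_update_eq']
  have himg : (padded x (x ⟨p, hp⟩) : Fin n → X) '' {p}ᶜ = Set.range x := by
    ext a
    simp only [Set.mem_image, Set.mem_compl_iff, Set.mem_singleton_iff, Set.mem_range, padded]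
    constructor
    · rintro ⟨q, -, rfl⟩
      by_cases h : (q : ℕ) < k
      · exact ⟨⟨q, h⟩, by rw [dif_pos h]⟩
      · rw [dif_neg h]; exact ⟨_, rfl⟩
    · rintro ⟨l, rfl⟩
      by_cases hl : l = ⟨p, hp⟩
      · refine ⟨⟨k, hkn⟩, fun hq => ?_, ?_⟩
        · have : (p : ℕ) = k := by rw [← hq]
          omega
        · rw [dif_neg (by omega : ¬ (k : ℕ) < k), hl]
      · refine ⟨⟨l, l.isLt.trans hkn⟩, fun hq => hl ?_, by simp [l.isLt]⟩
        have : (p : ℕ) = l := by rw [← hq]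
        exact Fin.ext this.symm
  rw [himg]

lemma range_update_padded_head {k n : ℕ} (hkn : k < n) (x : Fin k → X) (c z : X)
    (p : Fin n) (hp : (p : ℕ) < k)
    (hc : c = z ∨ ∃ i : Fin k, i ≠ ⟨p, hp⟩ ∧ c = x i) :
    Set.range (Function.update (padded x c : Fin n → X) p z)
      = insert z (x '' {(⟨p, hp⟩ : Fin k)}ᶜ) := by
  rw [range_update_eq']
  ext a
  simp only [Set.mem_insert_iff, Set.mem_image, Set.mem_compl_iff, Set.mem_singleton_iff,
    padded]
  constructor
  · rintro (rfl | ⟨q, hq, rfl⟩)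
    · exact Or.inl rfl
    · by_cases h : (q : ℕ) < k
      · exact Or.inr ⟨⟨q, h⟩, fun he => hq (Fin.ext (Fin.mk_eq_mk.mp he)),
          by rw [dif_pos h]⟩
      · rw [dif_neg h]
        rcases hc with rfl | ⟨i, hi, rfl⟩
        · exact Or.inl rfl
        · exact Or.inr ⟨i, hi, rfl⟩
  · rintro (rfl | ⟨l, hl, rfl⟩)
    · exact Or.inl rfl
    · exact Or.inr ⟨⟨l, l.isLt.trans hkn⟩,
        fun hq => hl (Fin.ext (show (l : ℕ) = (p : ℕ) from by rw [← hq])),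
        by simp [l.isLt]⟩

end Aux

/-- A standard repetition-invariant $n$-distance satisfies the strong $k$-simplex inequality
with constant $1/(k-1) + 1/(k(k-1)(n-1))$. -/
theorem standard_repInv_strong_simplex {X : Type*} {n : ℕ} (hn : 3 ≤ n)
    (d : (Fin n → X) → ℝ) (hd : IsNDistance d)
    (hstd : ∀ (x : Fin n → X) (z : X),
      d x ≤ (1 / ((n : ℝ) - 1)) * ∑ i, d (Function.update x i z))
    (hrep : ∀ x y : Fin n → X, Set.range x = Set.range y → d x = d y)
    (k : ℕ) (hk2 : 2 ≤ k) (hkn : k ≤ n - 1)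
    (m : Fin k → ℕ) (hm : ∀ j, 1 ≤ m j) (hsum : ∑ j, m j = n) :
    ∀ (x : Fin k → X) (z : X),
      d (blowup m hsum x) ≤
        (1 / ((k : ℝ) - 1) + 1 / ((k : ℝ) * ((k : ℝ) - 1) * ((n : ℝ) - 1))) *
          ∑ i : Fin k, d (blowup m hsum (Function.update x i z)) := by
  classical
  intro x z
  have hkn' : k < n := by omega
  have hnR : (3 : ℝ) ≤ (n : ℝ) := by exact_mod_cast hn
  have hkR : (2 : ℝ) ≤ (k : ℝ) := by exact_mod_cast hk2
  have hknR : (k : ℝ) + 1 ≤ (n : ℝ) := by exact_mod_cast hkn'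
  have hn1 : (0 : ℝ) < (n : ℝ) - 1 := by linarith
  have hk1 : (0 : ℝ) < (k : ℝ) - 1 := by linarith
  set S : ℝ := ∑ i : Fin k, d (blowup m hsum (Function.update x i z)) with hS
  set E : ℝ := d (padded x z : Fin n → X) with hE
  have hE0 : 0 ≤ E := hd.nonneg _
  have hDrange : ∀ j : Fin k, Set.range (blowup m hsum (Function.update x j z))
      = insert z (x '' {j}ᶜ) := fun j => by
    rw [mem_range_blowup m hsum hm, range_update_eq']
  -- the sum for the w-tuple
  have hwsum : ∑ p : Fin n, d (Function.update (padded x z : Fin n → X) p z)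
      = S + ((n : ℝ) - (k : ℝ)) * E := by
    have hterm : ∀ p : Fin n, d (Function.update (padded x z : Fin n → X) p z)
        = (fun q : ℕ => if h : q < k then
            d (blowup m hsum (Function.update x ⟨q, h⟩ z)) else E) p.val := by
      intro p
      by_cases h : (p : ℕ) < k
      · simp only [dif_pos h]
        exact hrep _ _ (by
          rw [range_update_padded_head hkn' x z z p h (Or.inl rfl), hDrange])
      · simp only [dif_neg h]
        rw [hE]
        congr 1
        have hz : (padded x z : Fin n → X) p = z := by rw [padded]; exact dif_neg h
        exact Function.update_eq_self_iff.mpr hz.symm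
    rw [Finset.sum_congr rfl (fun p _ => hterm p), Fin.sum_univ_eq_sum_range
      (fun q : ℕ => if h : q < k then
        d (blowup m hsum (Function.update x ⟨q, h⟩ z)) else E) n,
      Finset.range_eq_Ico, ← Finset.sum_Ico_consecutive _ (Nat.zero_le k) (le_of_lt hkn')]
    have h1 : ∑ q ∈ Finset.Ico 0 k, (fun q : ℕ => if h : q < k then
        d (blowup m hsum (Function.update x ⟨q, h⟩ z)) else E) q = S := by
      rw [← Finset.range_eq_Ico, ← Fin.sum_univ_eq_sum_range, hS]
      refine Finset.sum_congr rfl fun j _ => ?_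
      simp only [dif_pos j.isLt, Fin.eta]
    have h2 : ∑ q ∈ Finset.Ico k n, (fun q : ℕ => if h : q < k then
        d (blowup m hsum (Function.update x ⟨q, h⟩ z)) else E) q
        = ((n : ℝ) - (k : ℝ)) * E := by
      rw [Finset.sum_congr rfl (fun q hq => dif_neg (by
        have := (Finset.mem_Ico.mp hq).1; omega)), Finset.sum_const, Nat.card_Ico,
        nsmul_eq_mul, Nat.cast_sub (le_of_lt hkn')]
    rw [h1, h2]
  have hII : ((k : ℝ) - 1) * E ≤ S := by
    have h1 := hstd (padded x z) z
    rw [← hE, hwsum, one_div, inv_mul_eq_div, le_div_iff₀ hn1] at h1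
    nlinarith
  -- the per-i inequality
  have hI : ∀ i : Fin k, ((n : ℝ) - 1) * d (blowup m hsum x)
      ≤ S - d (blowup m hsum (Function.update x i z)) + ((n : ℝ) - (k : ℝ) + 1) * E := by
    intro i
    have hdy : d (blowup m hsum x) = d (padded x (x i) : Fin n → X) :=
      hrep _ _ (by rw [mem_range_blowup m hsum hm, range_padded hkn',
        Set.insert_eq_self.mpr (Set.mem_range_self i)])
    have hterm : ∀ p : Fin n, d (Function.update (padded x (x i) : Fin n → X) p z)
        = (fun q : ℕ => if h : q < k then
            (if (⟨q, h⟩ : Fin k) = i then E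
              else d (blowup m hsum (Function.update x ⟨q, h⟩ z)))
          else E) p.val := by
      intro p
      by_cases h : (p : ℕ) < k
      · simp only [dif_pos h]
        by_cases hji : (⟨(p : ℕ), h⟩ : Fin k) = i
        · rw [if_pos hji, hE]
          refine hrep _ _ ?_
          rw [← hji, range_update_padded_head' hkn' x z p h, range_padded hkn']
        · rw [if_neg hji]
          refine hrep _ _ ?_
          rw [range_update_padded_head hkn' x (x i) z p h (Or.inr ⟨i, Ne.symm hji, rfl⟩),
            hDrange]
      · simp only [dif_neg h]
        rw [hE]
        refine hrep _ _ ?_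
        rw [range_update_padded_tail hkn' x (x i) z (Set.mem_range_self i) p h,
          range_padded hkn']
    have hysum : ∑ p : Fin n, d (Function.update (padded x (x i) : Fin n → X) p z)
        = S - d (blowup m hsum (Function.update x i z)) + E + ((n : ℝ) - (k : ℝ)) * E := by
      rw [Finset.sum_congr rfl (fun p _ => hterm p), Fin.sum_univ_eq_sum_range
        (fun q : ℕ => if h : q < k then
          (if (⟨q, h⟩ : Fin k) = i then E
            else d (blowup m hsum (Function.update x ⟨q, h⟩ z)))
          else E) n,
        Finset.range_eq_Ico, ← Finset.sum_Ico_consecutive _ (Nat.zero_le k) (le_of_lt hkn')]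
      have h1 : ∑ q ∈ Finset.Ico 0 k, (fun q : ℕ => if h : q < k then
          (if (⟨q, h⟩ : Fin k) = i then E
            else d (blowup m hsum (Function.update x ⟨q, h⟩ z)))
          else E) q = S - d (blowup m hsum (Function.update x i z)) + E := by
        rw [← Finset.range_eq_Ico, ← Fin.sum_univ_eq_sum_range]
        have heq : ∀ j : Fin k, (fun q : ℕ => if h : q < k then
            (if (⟨q, h⟩ : Fin k) = i then E
              else d (blowup m hsum (Function.update x ⟨q, h⟩ z)))
            else E) j.val
            = Function.update (fun j : Fin k =>
                d (blowup m hsum (Function.update x j z))) i E j := by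
          intro j
          simp only [dif_pos j.isLt, Fin.eta, Function.update_apply]
        rw [Finset.sum_congr rfl (fun j _ => heq j),
          Finset.sum_update_of_mem (Finset.mem_univ i),
          Finset.sum_sdiff_eq_sub (Finset.subset_univ {i}), Finset.sum_singleton, hS]
        try ring
      have h2 : ∑ q ∈ Finset.Ico k n, (fun q : ℕ => if h : q < k then
          (if (⟨q, h⟩ : Fin k) = i then E
            else d (blowup m hsum (Function.update x ⟨q, h⟩ z)))
          else E) q = ((n : ℝ) - (k : ℝ)) * E := by
        rw [Finset.sum_congr rfl (fun q hq => dif_neg (by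
          have := (Finset.mem_Ico.mp hq).1; omega)), Finset.sum_const, Nat.card_Ico,
          nsmul_eq_mul, Nat.cast_sub (le_of_lt hkn')]
      rw [h1, h2]
    have h1 := hstd (padded x (x i)) z
    rw [← hdy, hysum, one_div, inv_mul_eq_div, le_div_iff₀ hn1] at h1
    linarith
  -- combine
  have hsumI : (k : ℝ) * (((n : ℝ) - 1) * d (blowup m hsum x))
      ≤ (k : ℝ) * S - S + (k : ℝ) * (((n : ℝ) - (k : ℝ) + 1) * E) := by
    have h := Finset.sum_le_sum (fun i (_ : i ∈ (Finset.univ : Finset (Fin k))) => hI i)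
    rw [Finset.sum_const, Finset.card_univ, Fintype.card_fin, nsmul_eq_mul] at h
    have hrhs : ∑ i : Fin k, (S - d (blowup m hsum (Function.update x i z))
          + ((n : ℝ) - (k : ℝ) + 1) * E)
        = (k : ℝ) * S - S + (k : ℝ) * (((n : ℝ) - (k : ℝ) + 1) * E) := by
      rw [Finset.sum_add_distrib, Finset.sum_sub_distrib, Finset.sum_const, Finset.sum_const,
        Finset.card_univ, Fintype.card_fin, nsmul_eq_mul, nsmul_eq_mul, ← hS]
      try ring
    rw [hrhs] at h
    exact h
  have hc : 1 / ((k : ℝ) - 1) + 1 / ((k : ℝ) * ((k : ℝ) - 1) * ((n : ℝ) - 1))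
      = ((k : ℝ) * ((n : ℝ) - 1) + 1) / ((k : ℝ) * ((k : ℝ) - 1) * ((n : ℝ) - 1)) := by
    field_simp
  have hpos : (0 : ℝ) < (k : ℝ) * ((k : ℝ) - 1) * ((n : ℝ) - 1) :=
    mul_pos (mul_pos (by linarith) hk1) hn1
  rw [hc, div_mul_eq_mul_div, le_div_iff₀ hpos]
  nlinarith [mul_le_mul_of_nonneg_left hsumI (le_of_lt hk1),
    mul_le_mul_of_nonneg_left hII
      (show (0 : ℝ) ≤ (k : ℝ) * ((n : ℝ) - (k : ℝ) + 1) from by nlinarith)]
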